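/- Let W₁ be the (p/2)×p low-pass Haar filter matrix (p = 2^s). If C is a p×p circulant matrix, then W₁ C W₁ᵀ is a (p/2)×(p/2) circulant matrix. -/

import Mathlib

open Matrix

/-- Let `W₁` be the `(p/2) × p` low-pass Haar filter matrix with
`p = 2^s`, `s ≥ 1`. If `C` is a `p × p` circulant matrix
(`C i j = c ((j − i) mod p)`), then `W₁ C W₁ᵀ` is a `(p/2) × (p/2)` circulant
matrix. -/
theorem haar_lowpass_circulant {s : ℕ} (hs : 1 ≤ s)
    (W1 : Matrix (Fin (2 ^ (s - 1))) (Fin (2 ^ s)) ℝ)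
    (hW1 : ∀ (k : Fin (2 ^ (s - 1))) (j : Fin (2 ^ s)),
      W1 k j = if (j : ℕ) = 2 * (k : ℕ) ∨ (j : ℕ) = 2 * (k : ℕ) + 1
        then 1 / Real.sqrt 2 else 0)
    (C : Matrix (Fin (2 ^ s)) (Fin (2 ^ s)) ℝ)
    (hC : ∃ c : ZMod (2 ^ s) → ℝ, ∀ i j : Fin (2 ^ s),
      C i j = c (((j : ℕ) : ZMod (2 ^ s)) - ((i : ℕ) : ZMod (2 ^ s)))) :
    ∃ c' : ZMod (2 ^ (s - 1)) → ℝ, ∀ i j : Fin (2 ^ (s - 1)),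
      (W1 * C * W1ᵀ) i j =
        c' (((j : ℕ) : ZMod (2 ^ (s - 1))) - ((i : ℕ) : ZMod (2 ^ (s - 1)))) := by
  obtain ⟨c, hc⟩ := hC
  have hps : 2 ^ s = 2 * 2 ^ (s - 1) := by
    rw [← pow_succ']
    congr 1
    omega
  have hnpos : 0 < 2 ^ (s - 1) := Nat.pow_pos (by norm_num)
  haveI : NeZero (2 ^ (s - 1)) := ⟨hnpos.ne'⟩
  set r : ℝ := 1 / Real.sqrt 2 with hr
  -- summation lemma for rows of W1
  have hsum : ∀ (k : Fin (2 ^ (s - 1))) (v : Fin (2 ^ s) → ℝ),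
      (∑ a, W1 k a * v a) =
        r * v ⟨2 * k, by have := k.isLt; omega⟩ +
        r * v ⟨2 * k + 1, by have := k.isLt; omega⟩ := by
    intro k v
    have hk := k.isLt
    set a0 : Fin (2 ^ s) := ⟨2 * k, by omega⟩ with ha0
    set a1 : Fin (2 ^ s) := ⟨2 * k + 1, by omega⟩ with ha1
    have ha0v : (a0 : ℕ) = 2 * k := rfl
    have ha1v : (a1 : ℕ) = 2 * k + 1 := rfl
    have hne : a0 ≠ a1 := by
      simp [Fin.ext_iff, ha0v, ha1v]
    have step : ∀ a : Fin (2 ^ s), W1 k a * v a =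
        (if a = a0 then r * v a0 else 0) + (if a = a1 then r * v a1 else 0) := by
      intro a
      rw [hW1]
      by_cases h0 : a = a0
      · subst h0
        simp [ha0v, hne]
      · by_cases h1 : a = a1
        · subst h1
          simp [ha1v, Ne.symm hne]
        · have hcond : ¬((a : ℕ) = 2 * (k : ℕ) ∨ (a : ℕ) = 2 * (k : ℕ) + 1) := by
            push_neg
            constructor
            · intro h; exact h0 (Fin.ext h)
            · intro h; exact h1 (Fin.ext h)
          simp [hcond, h0, h1]
    rw [Finset.sum_congr rfl (fun a _ => step a), Finset.sum_add_distrib,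
      Finset.sum_ite_eq' Finset.univ a0, Finset.sum_ite_eq' Finset.univ a1]
    simp
  -- the candidate circulant symbol
  refine ⟨fun d => r * (r * c (2 * ((d.val : ℕ) : ZMod (2 ^ s)))
      + r * c (2 * ((d.val : ℕ) : ZMod (2 ^ s)) + 1))
    + r * (r * c (2 * ((d.val : ℕ) : ZMod (2 ^ s)) - 1)
      + r * c (2 * ((d.val : ℕ) : ZMod (2 ^ s)))), ?_⟩
  intro i j
  set d : ZMod (2 ^ (s - 1)) := ((j : ℕ) : ZMod (2 ^ (s - 1))) - ((i : ℕ) : ZMod (2 ^ (s - 1))) with hd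
  -- key congruence
  have hdvd : ((2 ^ (s - 1) : ℕ) : ℤ) ∣ ((j : ℕ) : ℤ) - ((i : ℕ) : ℤ) - (d.val : ℤ) := by
    have h0 : ((((j : ℕ) : ℤ) - ((i : ℕ) : ℤ) - (d.val : ℤ) : ℤ) : ZMod (2 ^ (s - 1))) = 0 := by
      push_cast
      rw [ZMod.natCast_val, ZMod.cast_id]
      rw [hd]
      ring
    exact (ZMod.intCast_zmod_eq_zero_iff_dvd _ (2 ^ (s - 1))).mp h0
  obtain ⟨t, ht⟩ := hdvd
  have key : 2 * ((j : ℕ) : ZMod (2 ^ s)) - 2 * ((i : ℕ) : ZMod (2 ^ s))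
      = 2 * ((d.val : ℕ) : ZMod (2 ^ s)) := by
    have h0 : ((2 * ((j : ℕ) : ℤ) - 2 * ((i : ℕ) : ℤ) - 2 * (d.val : ℤ) : ℤ)
        : ZMod (2 ^ s)) = 0 := by
      refine (ZMod.intCast_zmod_eq_zero_iff_dvd _ _).mpr ⟨t, ?_⟩
      have h2n : ((2 ^ s : ℕ) : ℤ) = 2 * ((2 ^ (s - 1) : ℕ) : ℤ) := by exact_mod_cast hps
      rw [h2n]
      linarith [ht]
    push_cast at h0
    linear_combination h0
  have hX : ((2 * (j : ℕ) : ℕ) : ZMod (2 ^ s)) - ((2 * (i : ℕ) : ℕ) : ZMod (2 ^ s))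
      = 2 * ((d.val : ℕ) : ZMod (2 ^ s)) := by
    push_cast
    linear_combination key
  have hY : ((2 * (j : ℕ) + 1 : ℕ) : ZMod (2 ^ s)) - ((2 * (i : ℕ) : ℕ) : ZMod (2 ^ s))
      = 2 * ((d.val : ℕ) : ZMod (2 ^ s)) + 1 := by
    push_cast
    linear_combination key
  have hZ : ((2 * (j : ℕ) : ℕ) : ZMod (2 ^ s)) - ((2 * (i : ℕ) + 1 : ℕ) : ZMod (2 ^ s))
      = 2 * ((d.val : ℕ) : ZMod (2 ^ s)) - 1 := by
    push_cast
    linear_combination key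
  have hW : ((2 * (j : ℕ) + 1 : ℕ) : ZMod (2 ^ s)) - ((2 * (i : ℕ) + 1 : ℕ) : ZMod (2 ^ s))
      = 2 * ((d.val : ℕ) : ZMod (2 ^ s)) := by
    push_cast
    linear_combination key
  -- compute the entry
  have hCW : ∀ a : Fin (2 ^ s), (C * W1ᵀ) a j =
      r * C a ⟨2 * j, by have := j.isLt; omega⟩ +
      r * C a ⟨2 * j + 1, by have := j.isLt; omega⟩ := by
    intro a
    rw [Matrix.mul_apply]
    rw [Finset.sum_congr rfl (fun b _ => by
      rw [Matrix.transpose_apply]; ring_nf : ∀ b ∈ Finset.univ,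
        C a b * W1ᵀ b j = W1 j b * C a b)]
    exact hsum j (fun b => C a b)
  rw [Matrix.mul_assoc, Matrix.mul_apply]
  rw [hsum i (fun a => (C * W1ᵀ) a j)]
  rw [hCW, hCW]
  simp only [hc, Fin.val_mk]
  rw [hX, hY, hZ, hW]
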